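/- Let {φ_x : x∈Ω} and {ψ_y : y∈Ω} be two mutually unbiased bases of a 2-dimensional complex Hilbert space H with |Ω| = 2, and let λ, μ ∈ ℝ with λ² + μ² ≤ 1. Define C(x,y) = (1/2)·A_λ(x) + (1/2)·B_μ(y) − (1/4)·1 for all x, y ∈ Ω. Then each C(x,y) is positive semidefinite and C is a joint observable of A_λ and B_μ; in particular, the observables A_λ and B_μ are compatible. -/

import Mathlib

open scoped InnerProductSpace

noncomputable section

/-- An observable with outcome set `Ω`: positive semidefinite operators summing to `1`. -/
def IsObservable {Ω H : Type*} [Fintype Ω] [NormedAddCommGroup H] [InnerProductSpace ℂ H]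
    [CompleteSpace H] (A : Ω → H →L[ℂ] H) : Prop :=
  (∀ x, (A x).IsPositive) ∧ (∑ x, A x) = 1

/-- `C` is a joint observable of `A` and `B`. -/
def IsJointObservable {Ω H : Type*} [Fintype Ω] [NormedAddCommGroup H] [InnerProductSpace ℂ H]
    [CompleteSpace H] (C : Ω × Ω → H →L[ℂ] H) (A B : Ω → H →L[ℂ] H) : Prop :=
  IsObservable C ∧ (∀ x, (∑ y, C (x, y)) = A x) ∧ (∀ y, (∑ x, C (x, y)) = B y)

/-- The set of all compatible pairs of observables. -/
def CO (Ω H : Type*) [Fintype Ω] [NormedAddCommGroup H] [InnerProductSpace ℂ H]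
    [CompleteSpace H] : Set ((Ω → H →L[ℂ] H) × (Ω → H →L[ℂ] H)) :=
  {AB | ∃ C, IsJointObservable C AB.1 AB.2}

/-- The rank-one operator `|φ⟩⟨φ|`. -/
def outer {H : Type*} [NormedAddCommGroup H] [InnerProductSpace ℂ H] (φ : H) : H →L[ℂ] H :=
  (innerSL ℂ φ).smulRight φ

@[simp] lemma outer_apply {H : Type*} [NormedAddCommGroup H] [InnerProductSpace ℂ H]
    (φ v : H) : outer φ v = ⟪φ, v⟫_ℂ • φ := rfl

lemma sum_outer {H : Type*} [NormedAddCommGroup H] [InnerProductSpace ℂ H]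
    {Ω : Type*} [Fintype Ω] (b : OrthonormalBasis Ω ℂ H) :
    ∑ z, outer (b z) = 1 := by
  ext v
  simp only [ContinuousLinearMap.sum_apply, outer_apply, ContinuousLinearMap.one_apply]
  simpa [b.repr_apply_apply] using b.sum_repr v

lemma exists_other {Ω : Type*} [Fintype Ω] [DecidableEq Ω] (hcard : Fintype.card Ω = 2)
    (x : Ω) : ∃ x', x ≠ x' ∧ (Finset.univ : Finset Ω) = {x, x'} := by
  have h1 : (Finset.univ.erase x).card = 1 := by
    rw [Finset.card_erase_of_mem (Finset.mem_univ x), Finset.card_univ, hcard]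
  obtain ⟨x', hx'⟩ := Finset.card_pos.mp (by omega : 0 < (Finset.univ.erase x).card)
  have hne : x ≠ x' := fun h => (Finset.ne_of_mem_erase hx') h.symm
  refine ⟨x', hne, ?_⟩
  refine (Finset.eq_of_subset_of_card_le (Finset.subset_univ _) ?_).symm
  rw [Finset.card_univ, hcard, Finset.card_insert_of_notMem (by simp [hne]),
    Finset.card_singleton]

lemma key_ineq (lam mu a b t : ℝ) (hdisk : lam ^ 2 + mu ^ 2 ≤ 1) (ht : 0 ≤ t)
    (h : (t - 2 * a) ^ 2 + (t - 2 * b) ^ 2 ≤ t ^ 2) :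
    0 ≤ lam / 2 * a + mu / 2 * b + (1 - lam - mu) / 4 * t := by
  have hQ : (0:ℝ) ≤ (t - 2 * a) ^ 2 + (t - 2 * b) ^ 2 := by positivity
  have hs2 : (lam * (t - 2 * a) + mu * (t - 2 * b)) ^ 2 ≤ t ^ 2 := by
    nlinarith [sq_nonneg (lam * (t - 2 * b) - mu * (t - 2 * a)), hQ, hdisk, h]
  nlinarith [hs2, ht]

lemma re_sq_le_normSq (z : ℂ) : z.re ^ 2 ≤ Complex.normSq z := by
  rw [Complex.normSq_apply]; nlinarith [sq_nonneg z.im]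

set_option synthInstance.maxHeartbeats 1000000 in
set_option maxHeartbeats 1000000 in
theorem qubit_joint_observable
    {H : Type*} [NormedAddCommGroup H] [InnerProductSpace ℂ H] [FiniteDimensional ℂ H]
    {Ω : Type*} [Fintype Ω] [DecidableEq Ω]
    (hcard : Fintype.card Ω = 2) (hdim : Module.finrank ℂ H = 2)
    (φ ψ : OrthonormalBasis Ω ℂ H)
    (hMUB : ∀ x y : Ω, ‖⟪φ x, ψ y⟫_ℂ‖ = 1 / Real.sqrt 2)
    (lam mu : ℝ) (hdisk : lam ^ 2 + mu ^ 2 ≤ 1)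
    (C : Ω × Ω → H →L[ℂ] H)
    (hC : ∀ x y : Ω, C (x, y) =
      (1 / 2 : ℝ) • (lam • outer (φ x) + ((1 - lam) / 2) • (1 : H →L[ℂ] H))
        + (1 / 2 : ℝ) • (mu • outer (ψ y) + ((1 - mu) / 2) • (1 : H →L[ℂ] H))
        - (1 / 4 : ℝ) • (1 : H →L[ℂ] H)) :
    (∀ p : Ω × Ω, (C p).IsPositive) ∧
      IsJointObservable C
        (fun x => lam • outer (φ x) + ((1 - lam) / 2) • (1 : H →L[ℂ] H))
        (fun y => mu • outer (ψ y) + ((1 - mu) / 2) • (1 : H →L[ℂ] H)) := by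
  have hC' : ∀ x y : Ω, C (x, y) =
      (lam / 2 : ℝ) • outer (φ x) + ((mu / 2 : ℝ) • outer (ψ y)
        + ((1 - lam - mu) / 4 : ℝ) • (1 : H →L[ℂ] H)) := by
    intro x y; rw [hC]; module
  have hmarg1 : ∀ x : Ω, ∑ y, C (x, y)
      = lam • outer (φ x) + ((1 - lam) / 2) • (1 : H →L[ℂ] H) := by
    intro x
    simp only [hC']
    rw [Finset.sum_add_distrib, Finset.sum_add_distrib, ← Finset.smul_sum, ← Finset.smul_sum,
      sum_outer ψ, Finset.sum_const, Finset.sum_const, Finset.card_univ, hcard]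
    module
  have hmarg2 : ∀ y : Ω, ∑ x, C (x, y)
      = mu • outer (ψ y) + ((1 - mu) / 2) • (1 : H →L[ℂ] H) := by
    intro y
    simp only [hC']
    rw [Finset.sum_add_distrib, Finset.sum_add_distrib, ← Finset.smul_sum, ← Finset.smul_sum,
      sum_outer φ, Finset.sum_const, Finset.sum_const, Finset.card_univ, hcard]
    module
  have htot : ∑ p : Ω × Ω, C p = 1 := by
    rw [Fintype.sum_prod_type]
    simp only [hmarg1]
    rw [Finset.sum_add_distrib, ← Finset.smul_sum, sum_outer φ, Finset.sum_const,
      Finset.card_univ, hcard]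
    module
  have hpos : ∀ p : Ω × Ω, (C p).IsPositive := by
    rintro ⟨x, y⟩
    constructor
    · intro u w
      rw [hC' x y]
      simp only [ContinuousLinearMap.coe_coe, ContinuousLinearMap.add_apply,
        ContinuousLinearMap.smul_apply, ContinuousLinearMap.one_apply, outer_apply]
      simp only [inner_add_left, inner_add_right, RCLike.real_smul_eq_coe_smul (K := ℂ),
        inner_smul_left, inner_smul_right, RCLike.conj_ofReal, inner_conj_symm]
      ring
    · intro v
      obtain ⟨x', hne, huniv⟩ := exists_other hcard x
      set α := ⟪φ x, v⟫_ℂ with hα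
      set β := ⟪φ x', v⟫_ℂ with hβ
      set c := ⟪ψ y, φ x⟫_ℂ with hc
      set d := ⟪ψ y, φ x'⟫_ℂ with hd
      set A := Complex.normSq α with hA
      set B := Complex.normSq β with hB
      have hA0 : 0 ≤ A := Complex.normSq_nonneg _
      have hB0 : 0 ≤ B := Complex.normSq_nonneg _
      have hψv : ⟪ψ y, v⟫_ℂ = c * α + d * β := by
        have h := φ.sum_inner_mul_inner (ψ y) v
        rw [show (Finset.univ : Finset Ω) = {x, x'} from huniv, Finset.sum_pair hne] at h
        exact h.symm
      have ht : (⟪v, v⟫_ℂ).re = A + B := by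
        have h := φ.sum_inner_mul_inner v v
        rw [show (Finset.univ : Finset Ω) = {x, x'} from huniv, Finset.sum_pair hne] at h
        rw [← h, ← inner_conj_symm v (φ x), ← inner_conj_symm v (φ x'), ← hα, ← hβ]
        simp [hA, hB, ← Complex.normSq_eq_conj_mul_self]
      have hnc : Complex.normSq c = 1 / 2 := by
        have habs : ‖c‖ = 1 / Real.sqrt 2 := by
          rw [hc, ← inner_conj_symm (ψ y) (φ x), Complex.norm_conj]; exact hMUB x y
        rw [← Complex.sq_norm, habs, div_pow, one_pow, Real.sq_sqrt (by norm_num : (0:ℝ) ≤ 2)]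
      have hnd : Complex.normSq d = 1 / 2 := by
        have habs : ‖d‖ = 1 / Real.sqrt 2 := by
          rw [hd, ← inner_conj_symm (ψ y) (φ x'), Complex.norm_conj]; exact hMUB x' y
        rw [← Complex.sq_norm, habs, div_pow, one_pow, Real.sq_sqrt (by norm_num : (0:ℝ) ≤ 2)]
      set b := Complex.normSq (c * α + d * β) with hbdef
      have hb0 : 0 ≤ b := Complex.normSq_nonneg _
      set r := (c * α * (starRingEnd ℂ) (d * β)).re with hr
      clear_value α β c d A B b r
      have hbval : b = A / 2 + B / 2 + 2 * r := by
        rw [hbdef, Complex.normSq_add, Complex.normSq_mul, Complex.normSq_mul, hnc, hnd, hA, hB,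
          hr]
        ring
      have hr2 : r ^ 2 ≤ A * B / 4 := by
        have h1 := re_sq_le_normSq (c * α * (starRingEnd ℂ) (d * β))
        rw [Complex.normSq_mul, Complex.normSq_conj, Complex.normSq_mul, Complex.normSq_mul,
          hnc, hnd] at h1
        rw [hr]; nlinarith [h1]
      have hgeom : ((A + B) - 2 * A) ^ 2 + ((A + B) - 2 * b) ^ 2 ≤ (A + B) ^ 2 := by
        nlinarith [hbval, hr2, hA0, hB0]
      have happ : ⟪(C (x, y)) v, v⟫_ℂ
          = ((lam / 2 : ℝ) : ℂ) * A + ((mu / 2 : ℝ) : ℂ) * b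
            + (((1 - lam - mu) / 4 : ℝ) : ℂ) * ⟪v, v⟫_ℂ := by
        rw [hC' x y]
        simp only [ContinuousLinearMap.add_apply, ContinuousLinearMap.smul_apply,
          ContinuousLinearMap.one_apply, outer_apply, RCLike.real_smul_eq_coe_smul (K := ℂ),
          inner_add_left, inner_smul_left, RCLike.conj_ofReal]
        rw [hψv, ← hα]
        rw [hbdef, hA, Complex.normSq_eq_conj_mul_self, Complex.normSq_eq_conj_mul_self]
        push_cast
        simp only [Complex.coe_algebraMap]
        ring
      have hre : (C (x, y)).reApplyInnerSelf v
          = lam / 2 * A + mu / 2 * b + (1 - lam - mu) / 4 * (A + B) := by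
        rw [ContinuousLinearMap.reApplyInnerSelf_apply]
        have : (⟪(C (x, y)) v, v⟫_ℂ).re
            = lam / 2 * A + mu / 2 * b + (1 - lam - mu) / 4 * ((⟪v, v⟫_ℂ).re) := by
          rw [happ]
          simp [Complex.add_re, Complex.re_ofReal_mul]
        rw [ht] at this
        exact this
      rw [hre]
      exact key_ineq lam mu A b (A + B) hdisk (by linarith) (by simpa using hgeom)
  exact ⟨hpos, ⟨⟨hpos, htot⟩, hmarg1, hmarg2⟩⟩
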